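/- A set L ⊆ ℝ is locally monitorable if and only if the intersection of the prime closures L̄ ∩ (L^c)̄ contains no non-empty prime-open subset. -/
import Mathlib


/-!
Abstract setting for real Mazurkiewicz traces: `T` is the set ℝ of real
traces with the prefix partial order, `P : Set T` is the set 𝒫 of prime
traces, `cone p` is `pℝ = {t : p ≤ t}`.
-/

namespace MzTrace

variable {T : Type} [PartialOrder T]

/-- `cone p` models `pℝ`, the set of traces having `p` as a prefix. -/
def cone (p : T) : Set T := Set.Ici p

/-- A set of traces is prime-open (w.r.t. the set `P` of prime traces)
if it is a union `⋃ {pℝ : p ∈ U}` for some `U ⊆ P`. -/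
def PrimeOpen (P : Set T) (L : Set T) : Prop := ∃ U ⊆ P, L = ⋃ p ∈ U, cone p

/-- A set is prime-closed if its complement is prime-open. -/
def PrimeClosed (P : Set T) (L : Set T) : Prop := PrimeOpen P Lᶜ

/-- The prime closure of `L`: the intersection of all prime-closed supersets. -/
def primeClosure (P : Set T) (L : Set T) : Set T := ⋂₀ {K | PrimeClosed P K ∧ L ⊆ K}

/-- A set `C` of traces is coherent if it has a common upper bound (a trace
`t` with `C ⊆ pref(t)`). -/
def Coherent (C : Set T) : Prop := BddAbove C

/-- `primePref P L` is `𝒫(L)`, the set of prime prefixes of elements of `L`. -/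
def primePref (P : Set T) (L : Set T) : Set T := {p ∈ P | ∃ t ∈ L, p ≤ t}

/-- `L` is locally monitorable: for every prime `s` there is a prime `t`
with `{s,t}` coherent (i.e. `s ≤ tℝ`) and `tℝ ⊆ L` or `tℝ ⊆ Lᶜ`. -/
def LocallyMonitorable (P : Set T) (L : Set T) : Prop :=
  ∀ s ∈ P, ∃ t ∈ P, Coherent {s, t} ∧ (cone t ⊆ L ∨ cone t ⊆ Lᶜ)

end MzTrace

namespace MzTrace

variable {T : Type} [PartialOrder T]

/-- If `x` is not in the prime closure of `L`, there is a prime `p ≤ x`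
whose cone avoids `L`. -/
lemma exists_prime_of_notMem_closure {P L : Set T} {x : T}
    (h : x ∉ primeClosure P L) : ∃ p ∈ P, p ≤ x ∧ cone p ⊆ Lᶜ := by
  simp only [primeClosure, Set.mem_sInter, Set.mem_setOf_eq, not_forall] at h
  obtain ⟨K, ⟨⟨U, hUP, hU⟩, hLK⟩, hxK⟩ := h
  have hx : x ∈ Kᶜ := hxK
  rw [hU] at hx
  simp only [Set.mem_iUnion] at hx
  obtain ⟨p, hpU, hpx⟩ := hx
  refine ⟨p, hUP hpU, hpx, fun y hy => ?_⟩
  have : y ∈ Kᶜ := by rw [hU]; exact Set.mem_iUnion₂.2 ⟨p, hpU, hy⟩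
  exact fun hyL => this (hLK hyL)

/-- If `x` is in the prime closure of `L`, no prime `p ≤ x` has its cone
inside `Lᶜ`. -/
lemma mem_closure_no_prime {P L : Set T} {x p : T}
    (hx : x ∈ primeClosure P L) (hp : p ∈ P) (hpx : p ≤ x)
    (hc : cone p ⊆ Lᶜ) : False := by
  have hK : PrimeClosed P (cone p)ᶜ := by
    refine ⟨{p}, Set.singleton_subset_iff.2 hp, ?_⟩
    simp [compl_compl]
  have hLK : L ⊆ (cone p)ᶜ := fun y hy hyc => hc hyc hy
  exact hx _ ⟨hK, hLK⟩ hpx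

/-- Proposition prop:c: `L` is locally monitorable iff
`L̄ ∩ (L^c)̄` contains no non-empty prime-open subset. -/
theorem locallyMonitorable_iff_no_nonempty_primeOpen (P : Set T) (L : Set T) :
    LocallyMonitorable P L ↔
      ∀ O : Set T, PrimeOpen P O → O ⊆ primeClosure P L ∩ primeClosure P Lᶜ → O = ∅ := by
  constructor
  · intro hLM O hO hsub
    obtain ⟨U, hUP, hU⟩ := hO
    rw [Set.eq_empty_iff_forall_notMem]
    intro x hx
    rw [hU] at hx
    simp only [Set.mem_iUnion] at hx
    obtain ⟨s, hsU, hsx⟩ := hx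
    obtain ⟨t, htP, ⟨u, hu⟩, ht⟩ := hLM s (hUP hsU)
    have hsu : s ≤ u := hu (Set.mem_insert _ _)
    have htu : t ≤ u := hu (Set.mem_insert_iff.2 (Or.inr rfl))
    have huO : u ∈ O := by
      rw [hU]; exact Set.mem_iUnion₂.2 ⟨s, hsU, hsu⟩
    have hu2 := hsub huO
    rcases ht with hL | hLc
    · exact mem_closure_no_prime hu2.2 htP htu (by rwa [compl_compl])
    · exact mem_closure_no_prime hu2.1 htP htu hLc
  · intro h s hs
    have hO : PrimeOpen P (cone s) := by
      refine ⟨{s}, Set.singleton_subset_iff.2 hs, by simp⟩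
    by_cases hsub : cone s ⊆ primeClosure P L ∩ primeClosure P Lᶜ
    · have := h _ hO hsub
      have hss : s ∈ cone s := le_refl s
      rw [this] at hss
      exact absurd hss (Set.notMem_empty s)
    · rw [Set.not_subset] at hsub
      obtain ⟨x, hxs, hx⟩ := hsub
      rw [Set.mem_inter_iff, not_and_or] at hx
      rcases hx with hx | hx
      · obtain ⟨t, htP, htx, htc⟩ := exists_prime_of_notMem_closure hx
        exact ⟨t, htP, ⟨x, fun y hy => by
          rcases hy with rfl | rfl <;> [exact hxs; exact htx]⟩, Or.inr htc⟩
      · obtain ⟨t, htP, htx, htc⟩ := exists_prime_of_notMem_closure hx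
        rw [compl_compl] at htc
        exact ⟨t, htP, ⟨x, fun y hy => by
          rcases hy with rfl | rfl <;> [exact hxs; exact htx]⟩, Or.inl htc⟩

end MzTrace
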